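/- For natural numbers n and p with 2p ≤ n, the number of noncrossing half-diagrams on n points with p arcs equals C(n,p) − C(n,p−1), where C(n,−1) = 0. -/

import Mathlib

/-- A noncrossing half-diagram on `n` points (realized as `Fin n`): a partial matching
of `{1,…,n}` into two-element arcs, with no crossing pair of arcs and no through-string
(unmatched point) lying strictly inside an arc. -/
structure HalfDiag (n : ℕ) where
  arcs : Finset (Finset (Fin n))
  two : ∀ a ∈ arcs, a.card = 2
  disj : ∀ a ∈ arcs, ∀ b ∈ arcs, a ≠ b → Disjoint a b
  nc1 : ∀ a ∈ arcs, ∀ b ∈ arcs, ∀ i j k l : Fin n,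
      i ∈ a → j ∈ a → k ∈ b → l ∈ b → i < k → k < j → j < l → False
  nc2 : ∀ a ∈ arcs, ∀ i j : Fin n, i ∈ a → j ∈ a →
      ∀ k : Fin n, (∀ b ∈ arcs, k ∉ b) → i < k → k < j → False

namespace HDaux

variable {n : ℕ}

/-- closers -/
def isCl (d : HalfDiag n) (x : Fin n) : Prop :=
  ∃ i, i < x ∧ ({i, x} : Finset (Fin n)) ∈ d.arcs
/-- openers -/
def isOp (d : HalfDiag n) (x : Fin n) : Prop :=
  ∃ j, x < j ∧ ({x, j} : Finset (Fin n)) ∈ d.arcs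

open Classical in
noncomputable def Phi (d : HalfDiag n) : Fin n → Bool :=
  fun x => if isCl d x then true else false

lemma Phi_true {d : HalfDiag n} {x} : Phi d x = true ↔ isCl d x := by
  classical simp [Phi]
lemma Phi_false {d : HalfDiag n} {x} : Phi d x = false ↔ ¬ isCl d x := by
  classical simp [Phi]

lemma arc_form {d : HalfDiag n} {a} (ha : a ∈ d.arcs) :
    ∃ i j : Fin n, i < j ∧ a = {i, j} := by
  obtain ⟨x, y, hxy, rfl⟩ := Finset.card_eq_two.mp (d.two a ha)
  rcases lt_or_gt_of_ne hxy with h | h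
  · exact ⟨x, y, h, rfl⟩
  · exact ⟨y, x, h, Finset.pair_comm x y⟩

lemma arc_unique {d : HalfDiag n} {a b} (ha : a ∈ d.arcs) (hb : b ∈ d.arcs)
    {x : Fin n} (hxa : x ∈ a) (hxb : x ∈ b) : a = b := by
  by_contra hne
  exact Finset.disjoint_left.mp (d.disj a ha b hb hne) hxa hxb

open Classical in
noncomputable def pt (d : HalfDiag n) (x : Fin n) : Fin n :=
  if h : ∃ y, y ≠ x ∧ ({x, y} : Finset (Fin n)) ∈ d.arcs then h.choose else x

lemma pt_spec {d : HalfDiag n} {x : Fin n} (h : ∃ a ∈ d.arcs, x ∈ a) :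
    pt d x ≠ x ∧ ({x, pt d x} : Finset (Fin n)) ∈ d.arcs := by
  classical
  obtain ⟨a, ha, hxa⟩ := h
  obtain ⟨i, j, hij, rfl⟩ := arc_form ha
  have hne : (i : Fin n) ≠ j := ne_of_lt hij
  have hex : ∃ y, y ≠ x ∧ ({x, y} : Finset (Fin n)) ∈ d.arcs := by
    rcases Finset.mem_insert.mp hxa with rfl | hxj
    · exact ⟨j, hne.symm, ha⟩
    · rcases Finset.mem_singleton.mp hxj with rfl
      exact ⟨i, hne, by rwa [Finset.pair_comm]⟩
  rw [pt, dif_pos hex]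
  exact ⟨hex.choose_spec.1, hex.choose_spec.2⟩

lemma mem_arc_eq {d : HalfDiag n} {a} {x : Fin n} (ha : a ∈ d.arcs) (hx : x ∈ a) :
    a = {x, pt d x} := by
  have h := pt_spec ⟨a, ha, hx⟩
  exact arc_unique ha h.2 hx (Finset.mem_insert_self x _)

lemma pt_arc {d : HalfDiag n} {x : Fin n} (h : ∃ a ∈ d.arcs, x ∈ a) :
    ({x, pt d x} : Finset (Fin n)) ∈ d.arcs := (pt_spec h).2

lemma pt_ne {d : HalfDiag n} {x : Fin n} (h : ∃ a ∈ d.arcs, x ∈ a) :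
    pt d x ≠ x := (pt_spec h).1

lemma inArc_pt {d : HalfDiag n} {x : Fin n} (h : ∃ a ∈ d.arcs, x ∈ a) :
    ∃ a ∈ d.arcs, pt d x ∈ a :=
  ⟨_, pt_arc h, by simp⟩

lemma pt_invol {d : HalfDiag n} {x : Fin n} (h : ∃ a ∈ d.arcs, x ∈ a) :
    pt d (pt d x) = x := by
  have h1 := pt_arc h
  have h2 := pt_arc (inArc_pt h)
  have he : ({x, pt d x} : Finset (Fin n)) = {pt d x, pt d (pt d x)} :=
    arc_unique h1 h2 (Finset.mem_insert_of_mem (Finset.mem_singleton_self _))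
      (Finset.mem_insert_self _ _)
  have hx : x ∈ ({pt d x, pt d (pt d x)} : Finset (Fin n)) := by
    rw [← he]; exact Finset.mem_insert_self _ _
  rcases Finset.mem_insert.mp hx with h' | h'
  · exact absurd h'.symm (pt_ne h)
  · exact (Finset.mem_singleton.mp h').symm

lemma cross {d : HalfDiag n} {i j k l : Fin n}
    (h1 : ({i,j} : Finset (Fin n)) ∈ d.arcs) (h2 : ({k,l} : Finset (Fin n)) ∈ d.arcs)
    (o1 : i < k) (o2 : k < j) (o3 : j < l) : False :=
  d.nc1 _ h1 _ h2 i j k l (by simp) (by simp) (by simp) (by simp) o1 o2 o3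

lemma mem_of_inside {d : HalfDiag n} {i j x : Fin n}
    (hij : ({i,j} : Finset (Fin n)) ∈ d.arcs) (h1 : i < x) (h2 : x < j) :
    ∃ a ∈ d.arcs, x ∈ a := by
  by_contra hfree
  push_neg at hfree
  exact d.nc2 _ hij i j (by simp) (by simp) x hfree h1 h2

lemma nest {d : HalfDiag n} {i j x : Fin n}
    (hij : ({i,j} : Finset (Fin n)) ∈ d.arcs) (h1 : i < x) (h2 : x < j)
    (hx : ∃ a ∈ d.arcs, x ∈ a) : i < pt d x ∧ pt d x < j := by
  set y := pt d x with hy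
  have hxy : ({x, y} : Finset (Fin n)) ∈ d.arcs := pt_arc hx
  have hne : ({x, y} : Finset (Fin n)) ≠ {i, j} := by
    intro he
    have : x ∈ ({i, j} : Finset (Fin n)) := by rw [← he]; simp
    rcases Finset.mem_insert.mp this with rfl | h'
    · exact absurd h1 (lt_irrefl _)
    · rw [Finset.mem_singleton.mp h'] at h2; exact absurd h2 (lt_irrefl _)
  have hyij : y ∉ ({i, j} : Finset (Fin n)) :=
    fun hmem => hne (arc_unique hxy hij (by simp) hmem)
  have hyi : y ≠ i := fun h => hyij (by simp [h])
  have hyj : y ≠ j := fun h => hyij (by simp [h])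
  have hynx : y ≠ x := pt_ne hx
  rcases lt_or_gt_of_ne hynx with hlt | hgt
  · have : i < y := by
      rcases lt_or_gt_of_ne hyi with h' | h'
      · exact absurd (cross (by rwa [Finset.pair_comm] at hxy) hij h' h1 h2) not_false
      · exact h'
    exact ⟨this, lt_trans hlt h2⟩
  · have : y < j := by
      rcases lt_or_gt_of_ne hyj with h' | h'
      · exact h'
      · exact absurd (cross hij hxy h1 h2 h') not_false
    exact ⟨lt_trans h1 hgt, this⟩

lemma isCl_pt_lt {d : HalfDiag n} {x : Fin n} (h : isCl d x) :
    (∃ a ∈ d.arcs, x ∈ a) ∧ pt d x < x := by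
  obtain ⟨i, hlt, harc⟩ := h
  have hx : ∃ a ∈ d.arcs, x ∈ a := ⟨_, harc, by simp⟩
  have he : ({i, x} : Finset (Fin n)) = {x, pt d x} := mem_arc_eq harc (by simp)
  have : pt d x ∈ ({i, x} : Finset (Fin n)) := by rw [he]; simp
  rcases Finset.mem_insert.mp this with h' | h'
  · exact ⟨hx, h' ▸ hlt⟩
  · exact absurd (Finset.mem_singleton.mp h') (pt_ne hx)

lemma isCl_of_arc {d : HalfDiag n} {x : Fin n} (hx : ∃ a ∈ d.arcs, x ∈ a)
    (hlt : pt d x < x) : isCl d x :=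
  ⟨pt d x, hlt, by rw [Finset.pair_comm]; exact pt_arc hx⟩

lemma isOp_iff {d : HalfDiag n} {x : Fin n} (hx : ∃ a ∈ d.arcs, x ∈ a) :
    ¬ isCl d x ↔ x < pt d x := by
  constructor
  · intro h
    rcases lt_or_gt_of_ne (pt_ne hx) with h' | h'
    · exact absurd (isCl_of_arc hx h') h
    · exact h'
  · intro h hc
    exact absurd (isCl_pt_lt hc).2 (not_lt_of_gt h)

lemma opener_not_isCl {d : HalfDiag n} {x : Fin n} (hx : ∃ a ∈ d.arcs, x ∈ a)
    (hlt : x < pt d x) : ¬ isCl d x := (isOp_iff hx).mpr hlt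



-- counts




/-- number of positions `< k` with value `b`. -/
def cB (b : Bool) (W : ℕ → Bool) (k : ℕ) : ℕ :=
  ((Finset.range k).filter (fun i => W i = b)).card

/-- height of the lattice path after `k` steps: #false − #true. -/
def ht (W : ℕ → Bool) (k : ℕ) : ℤ := (cB false W k : ℤ) - (cB true W k : ℤ)

lemma cB_zero (b W) : cB b W 0 = 0 := by simp [cB]

lemma cB_succ (b W k) : cB b W (k+1) = cB b W k + if W k = b then 1 else 0 := by
  simp [cB, Finset.range_add_one, Finset.filter_insert]
  split <;> simp [Finset.card_insert_of_notMem, *]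

lemma ht_zero (W) : ht W 0 = 0 := by simp [ht, cB_zero]

lemma ht_succ (W k) : ht W (k+1) = ht W k + (if W k then (-1 : ℤ) else 1) := by
  rcases h : W k with _ | _ <;> simp [ht, cB_succ, h] <;> ring

lemma ht_succ_true {W k} (h : W k = true) : ht W (k+1) = ht W k - 1 := by
  simp [ht_succ, h]; ring

lemma ht_succ_false {W k} (h : W k = false) : ht W (k+1) = ht W k + 1 := by
  simp [ht_succ, h]

lemma up_iff {W k} : W k = false ↔ ht W (k+1) = ht W k + 1 := by
  rcases h : W k with _ | _ <;> simp [ht_succ, h] <;> omega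

lemma down_iff {W k} : W k = true ↔ ht W (k+1) = ht W k - 1 := by
  rcases h : W k with _ | _ <;> simp [ht_succ, h] <;> omega

/-- discrete IVT: upward crossing. -/
lemma exists_up {W : ℕ → Bool} {a b : ℕ} {c : ℤ} (hab : a ≤ b)
    (ha : ht W a < c) (hb : c ≤ ht W b) :
    ∃ i, a ≤ i ∧ i < b ∧ W i = false ∧ ht W (i+1) = c ∧ ht W i = c - 1 := by
  have hP : ∃ m, c ≤ ht W (a + m) := ⟨b - a, by rwa [Nat.add_sub_cancel' hab]⟩
  classical
  set m := Nat.find hP with hm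
  have hPm : c ≤ ht W (a + m) := Nat.find_spec hP
  have hm0 : m ≠ 0 := by
    intro h0; rw [h0] at hPm; simp at hPm; omega
  have hmb : m ≤ b - a := Nat.find_le (by rwa [Nat.add_sub_cancel' hab])
  have hprev : ¬ c ≤ ht W (a + (m - 1)) := Nat.find_min hP (by omega)
  refine ⟨a + (m-1), by omega, by omega, ?_, ?_, ?_⟩ <;>
  · have hstep := ht_succ W (a + (m-1))
    have : a + (m - 1) + 1 = a + m := by omega
    rw [this] at hstep
    rcases h : W (a + (m-1)) with _|_ <;> rw [h] at hstep <;> simp_all <;> omega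







/-- first strict descent below `ht W (k+1)` after position `k`. -/
lemma exists_first_down {W : ℕ → Bool} {k b : ℕ} (hkb : k < b)
    (hdrop : ht W (b+1) < ht W (k+1)) :
    ∃ j, k < j ∧ j ≤ b ∧ W j = true ∧ ht W j = ht W (k+1) ∧
      ∀ q, k + 1 ≤ q → q ≤ j → ht W (k+1) ≤ ht W q := by
  classical
  have hP : ∃ m, ht W (k + m + 2) < ht W (k+1) := ⟨b - k - 1, by
    have : k + (b - k - 1) + 2 = b + 1 := by omega
    rwa [this]⟩
  set m := Nat.find hP with hm
  have hPm : ht W (k + m + 2) < ht W (k+1) := Nat.find_spec hP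
  have hmb : m ≤ b - k - 1 := Nat.find_le (by
    have : k + (b - k - 1) + 2 = b + 1 := by omega
    rwa [this])
  set j := k + 1 + m with hj
  have hint : ∀ q, k + 1 ≤ q → q ≤ j → ht W (k+1) ≤ ht W q := by
    intro q hq1 hq2
    rcases Nat.eq_or_lt_of_le hq1 with h | h
    · rw [← h]
    · have h2 : ¬ ht W (k + (q - k - 2) + 2) < ht W (k+1) := Nat.find_min hP (by omega)
      have : k + (q - k - 2) + 2 = q := by omega
      rw [this] at h2; omega
  have hjle : ht W (k+1) ≤ ht W j := hint j (by omega) le_rfl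
  have hjlt : ht W (j+1) < ht W (k+1) := by
    have : k + m + 2 = j + 1 := by omega
    rwa [this] at hPm
  have hWj : W j = true := by
    rcases h : W j with _|_
    · have := ht_succ_false h; omega
    · rfl
  have := ht_succ_true hWj
  exact ⟨j, by omega, by omega, hWj, by omega, hint⟩

lemma cB_split (b : Bool) (W : ℕ → Bool) {a c : ℕ} (hac : a ≤ c) :
    cB b W c = cB b W a + ((Finset.Ico a c).filter (fun i => W i = b)).card := by
  rw [cB, cB, Finset.range_eq_Ico,
    ← Finset.Ico_union_Ico_eq_Ico (Nat.zero_le a) hac, Finset.filter_union,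
    Finset.card_union_of_disjoint, Finset.range_eq_Ico]
  exact Finset.disjoint_filter_filter (Finset.Ico_disjoint_Ico_consecutive 0 a c)

lemma ht_diff (W : ℕ → Bool) {a c : ℕ} (hac : a ≤ c) :
    ht W c - ht W a = (((Finset.Ico a c).filter (fun i => W i = false)).card : ℤ)
      - ((Finset.Ico a c).filter (fun i => W i = true)).card := by
  have h1 := cB_split false W hac
  have h2 := cB_split true W hac
  simp only [ht]
  push_cast [h1, h2]
  ring



/-- extend a `Fin n` word to `ℕ` by `false`. -/
def ex (w : Fin n → Bool) : ℕ → Bool := fun k => if h : k < n then w ⟨k, h⟩ else false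

lemma ex_val (w : Fin n → Bool) (x : Fin n) : ex w x.val = w x := by
  simp [ex, x.isLt]

lemma ico_conv (w : Fin n → Bool) (b : Bool) {a c : ℕ} (hc : c ≤ n) :
    ((Finset.Ico a c).filter (fun i => ex w i = b)).card
      = (Finset.univ.filter (fun x : Fin n => a ≤ x.val ∧ x.val < c ∧ w x = b)).card := by
  refine Finset.card_bij' (fun i hi => ⟨i, by
      have := Finset.mem_filter.mp hi
      have := Finset.mem_Ico.mp this.1
      omega⟩) (fun x hx => x.val) ?_ ?_ ?_ ?_
  · intro i hi
    have h1 := Finset.mem_filter.mp hi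
    have h2 := Finset.mem_Ico.mp h1.1
    simp only [Finset.mem_filter, Finset.mem_univ, true_and]
    refine ⟨h2.1, h2.2, ?_⟩
    have h3 := h1.2
    rw [ex, dif_pos (show i < n by omega)] at h3
    exact h3
  · intro x hx
    have h1 := Finset.mem_filter.mp hx
    simp only [Finset.mem_filter, Finset.mem_Ico]
    exact ⟨⟨h1.2.1, h1.2.2.1⟩, by rw [ex_val]; exact h1.2.2.2⟩
  · intro i hi; rfl
  · intro x hx; rfl

lemma cB_conv (w : Fin n → Bool) (b : Bool) {c : ℕ} (hc : c ≤ n) :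
    cB b (ex w) c
      = (Finset.univ.filter (fun x : Fin n => x.val < c ∧ w x = b)).card := by
  rw [cB, Finset.range_eq_Ico, ico_conv w b hc]
  congr 1
  ext x
  simp [Nat.zero_le]

lemma cB_mono (b : Bool) (W : ℕ → Bool) {a c : ℕ} (hac : a ≤ c) :
    cB b W a ≤ cB b W c := by
  rw [cB_split b W hac]; omega

lemma cB_true_stable (w : Fin n → Bool) {k : ℕ} (hk : n ≤ k) :
    cB true (ex w) k = cB true (ex w) n := by
  rw [cB_split true (ex w) hk]
  have : ((Finset.Ico n k).filter (fun i => ex w i = true)) = ∅ := by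
    ext i
    simp only [Finset.mem_filter, Finset.mem_Ico, Finset.notMem_empty, iff_false]
    rintro ⟨⟨h1, h2⟩, h3⟩
    rw [ex, dif_neg (by omega)] at h3
    exact Bool.false_ne_true h3
  rw [this]; simp

/-- the ballot property -/
def Ballot (w : Fin n → Bool) : Prop := ∀ k, cB true (ex w) k ≤ cB false (ex w) k

lemma ballot_of_le_n (w : Fin n → Bool)
    (h : ∀ k ≤ n, cB true (ex w) k ≤ cB false (ex w) k) : Ballot w := by
  intro k
  rcases le_or_gt k n with hk | hk
  · exact h k hk
  · calc cB true (ex w) k = cB true (ex w) n := cB_true_stable w hk.le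
    _ ≤ cB false (ex w) n := h n le_rfl
    _ ≤ cB false (ex w) k := cB_mono _ _ hk.le

lemma phi_ballot (d : HalfDiag n) : Ballot (Phi d) := by
  apply ballot_of_le_n
  intro k hk
  rw [cB_conv _ _ hk, cB_conv _ _ hk]
  apply Finset.card_le_card_of_injOn (fun x => pt d x)
  · intro x hx
    simp only [Finset.mem_coe, Finset.mem_filter, Finset.mem_univ, true_and] at hx ⊢
    have hcl := Phi_true.mp hx.2
    have h := isCl_pt_lt hcl
    refine ⟨lt_trans h.2 hx.1, Phi_false.mpr ?_⟩
    apply opener_not_isCl (inArc_pt h.1)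
    rw [pt_invol h.1]
    exact h.2
  · intro x hx y hy hxy
    simp only [Finset.coe_filter, Finset.mem_univ, true_and, Set.mem_setOf_eq] at hx hy
    have hx1 := (isCl_pt_lt (Phi_true.mp hx.2)).1
    have hy1 := (isCl_pt_lt (Phi_true.mp hy.2)).1
    have hxy' : pt d x = pt d y := hxy
    rw [← pt_invol hx1, hxy', pt_invol hy1]

lemma balance {d : HalfDiag n} {i j : Fin n}
    (hij : ({i,j} : Finset (Fin n)) ∈ d.arcs) (hlt : i < j) :
    ht (ex (Phi d)) (i.val+1) = ht (ex (Phi d)) j.val := by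
  have hd := ht_diff (ex (Phi d)) (show i.val+1 ≤ j.val from hlt)
  rw [ico_conv _ _ (le_of_lt j.isLt), ico_conv _ _ (le_of_lt j.isLt)] at hd
  have hcard : (Finset.univ.filter
        (fun x : Fin n => i.val+1 ≤ x.val ∧ x.val < j.val ∧ Phi d x = false)).card
      = (Finset.univ.filter
        (fun x : Fin n => i.val+1 ≤ x.val ∧ x.val < j.val ∧ Phi d x = true)).card := by
    refine Finset.card_bij' (fun x hx => pt d x) (fun y hy => pt d y) ?_ ?_ ?_ ?_
    · intro x hx
      simp only [Finset.mem_filter, Finset.mem_univ, true_and] at hx ⊢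
      obtain ⟨ha, hb, hc⟩ := hx
      have h1 : i < x := ha
      have h2 : x < j := hb
      have hin : ∃ a ∈ d.arcs, x ∈ a := mem_of_inside hij h1 h2
      have hop : x < pt d x := (isOp_iff hin).mp (Phi_false.mp hc)
      have hn := nest hij h1 h2 hin
      refine ⟨hn.1, hn.2, Phi_true.mpr ?_⟩
      apply isCl_of_arc (inArc_pt hin)
      rw [pt_invol hin]
      exact hop
    · intro y hy
      simp only [Finset.mem_filter, Finset.mem_univ, true_and] at hy ⊢
      obtain ⟨ha, hb, hc⟩ := hy
      have h1 : i < y := ha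
      have h2 : y < j := hb
      have hcl := isCl_pt_lt (Phi_true.mp hc)
      have hn := nest hij h1 h2 hcl.1
      refine ⟨hn.1, hn.2, Phi_false.mpr ?_⟩
      apply opener_not_isCl (inArc_pt hcl.1)
      rw [pt_invol hcl.1]
      exact hcl.2
    · intro x hx
      simp only [Finset.mem_filter, Finset.mem_univ, true_and] at hx
      exact pt_invol (mem_of_inside hij (show i < x from hx.1) (show x < j from hx.2.1))
    · intro y hy
      simp only [Finset.mem_filter, Finset.mem_univ, true_and] at hy
      exact pt_invol (isCl_pt_lt (Phi_true.mp hy.2.2)).1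
  rw [hcard] at hd
  omega

lemma no_higher {d : HalfDiag n} {i j x : Fin n}
    (hij : ({i,j} : Finset (Fin n)) ∈ d.arcs)
    (h1 : i < x) (h2 : x < j) (hf : Phi d x = false) :
    ht (ex (Phi d)) (x.val+1) ≠ ht (ex (Phi d)) j.val := by
  intro heq
  have hd := ht_diff (ex (Phi d)) (show x.val+1 ≤ j.val from h2)
  rw [ico_conv _ _ (le_of_lt j.isLt), ico_conv _ _ (le_of_lt j.isLt)] at hd
  set FF := Finset.univ.filter
    (fun y : Fin n => x.val+1 ≤ y.val ∧ y.val < j.val ∧ Phi d y = false) with hFF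
  set TT := Finset.univ.filter
    (fun y : Fin n => x.val+1 ≤ y.val ∧ y.val < j.val ∧ Phi d y = true) with hTT
  have hxin : ∃ a ∈ d.arcs, x ∈ a := mem_of_inside hij h1 h2
  have hxop : x < pt d x := (isOp_iff hxin).mp (Phi_false.mp hf)
  have memTT : ∀ y : Fin n, x ≤ y → y < j → Phi d y = false → pt d y ∈ TT := by
    intro y hy1 hy2 hyf
    have hin : ∃ a ∈ d.arcs, y ∈ a := mem_of_inside hij (lt_of_lt_of_le h1 hy1) hy2
    have hop : y < pt d y := (isOp_iff hin).mp (Phi_false.mp hyf)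
    have hn := nest hij (lt_of_lt_of_le h1 hy1) hy2 hin
    simp only [hTT, Finset.mem_filter, Finset.mem_univ, true_and]
    refine ⟨lt_of_le_of_lt hy1 hop, hn.2, Phi_true.mpr ?_⟩
    apply isCl_of_arc (inArc_pt hin)
    rw [pt_invol hin]
    exact hop
  have hsub : insert (pt d x) (FF.image (pt d)) ⊆ TT := by
    intro z hz
    rcases Finset.mem_insert.mp hz with rfl | hz'
    · exact memTT x le_rfl h2 hf
    · obtain ⟨y, hy, rfl⟩ := Finset.mem_image.mp hz'
      simp only [hFF, Finset.mem_filter, Finset.mem_univ, true_and] at hy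
      exact memTT y (le_of_lt (show x < y from hy.1)) hy.2.1 hy.2.2
  have hinj : Set.InjOn (pt d) FF := by
    intro a ha b hb hab
    simp only [hFF, Finset.coe_filter, Finset.mem_univ, true_and, Set.mem_setOf_eq] at ha hb
    have hina : ∃ c ∈ d.arcs, a ∈ c :=
      mem_of_inside hij (lt_trans h1 (show x < a from ha.1)) ha.2.1
    have hinb : ∃ c ∈ d.arcs, b ∈ c :=
      mem_of_inside hij (lt_trans h1 (show x < b from hb.1)) hb.2.1
    rw [← pt_invol hina, hab, pt_invol hinb]
  have hnm : pt d x ∉ FF.image (pt d) := by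
    intro hmem
    obtain ⟨y, hy, hye⟩ := Finset.mem_image.mp hmem
    simp only [hFF, Finset.mem_filter, Finset.mem_univ, true_and] at hy
    have hiny : ∃ c ∈ d.arcs, y ∈ c :=
      mem_of_inside hij (lt_trans h1 (show x < y from hy.1)) hy.2.1
    have hyx : y = x := by rw [← pt_invol hiny, hye, pt_invol hxin]
    rw [hyx] at hy
    omega
  have hcard : FF.card + 1 ≤ TT.card := by
    have h1' : (FF.image (pt d)).card = FF.card := Finset.card_image_of_injOn hinj
    have h2' : (insert (pt d x) (FF.image (pt d))).card = FF.card + 1 := by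
      rw [Finset.card_insert_of_notMem hnm, h1']
    rw [← h2']
    exact Finset.card_le_card hsub
  omega

lemma closers_card (d : HalfDiag n) :
    (Finset.univ.filter (fun x => Phi d x = true)).card = d.arcs.card := by
  refine Finset.card_bij (fun x _ => ({pt d x, x} : Finset (Fin n))) ?_ ?_ ?_
  · intro x hx
    have hcl := isCl_pt_lt (Phi_true.mp (Finset.mem_filter.mp hx).2)
    show ({pt d x, x} : Finset (Fin n)) ∈ d.arcs
    rw [Finset.pair_comm]
    exact pt_arc hcl.1
  · intro a ha b hb heq
    have hca := isCl_pt_lt (Phi_true.mp (Finset.mem_filter.mp ha).2)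
    have hcb := isCl_pt_lt (Phi_true.mp (Finset.mem_filter.mp hb).2)
    by_contra hne
    have heq' : ({pt d a, a} : Finset (Fin n)) = {pt d b, b} := heq
    have hab : a ∈ ({pt d b, b} : Finset (Fin n)) := by
      rw [← heq']; simp
    rcases Finset.mem_insert.mp hab with h' | h'
    · have h2 : pt d a = b := by rw [h', pt_invol hcb.1]
      have l1 : a < b := by rw [h']; exact hcb.2
      have l2 : b < a := by rw [← h2]; exact hca.2
      exact absurd (lt_trans l1 l2) (lt_irrefl _)
    · exact hne (Finset.mem_singleton.mp h')
  · intro a ha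
    obtain ⟨i, j, hlt, rfl⟩ := arc_form ha
    have hcl : isCl d j := ⟨i, hlt, ha⟩
    refine ⟨j, Finset.mem_filter.mpr ⟨Finset.mem_univ _, Phi_true.mpr hcl⟩, ?_⟩
    have hje := mem_arc_eq ha (show j ∈ ({i,j} : Finset (Fin n)) by simp)
    show ({pt d j, j} : Finset (Fin n)) = {i, j}
    rw [Finset.pair_comm]
    exact hje.symm

def Cand (w : Fin n → Bool) (j : Fin n) : Finset (Fin n) :=
  Finset.univ.filter
    (fun i => i < j ∧ w i = false ∧ ht (ex w) (i.val+1) = ht (ex w) j.val)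

lemma mem_Cand {w : Fin n → Bool} {j i : Fin n} :
    i ∈ Cand w j ↔ i < j ∧ w i = false ∧ ht (ex w) (i.val+1) = ht (ex w) j.val := by
  simp [Cand]

open Classical in
noncomputable def oo (w : Fin n → Bool) (j : Fin n) : Fin n :=
  if h : (Cand w j).Nonempty then (Cand w j).max' h else j

lemma ht_nonneg {w : Fin n → Bool} (hw : Ballot w) (k : ℕ) : 0 ≤ ht (ex w) k := by
  have := hw k
  simp only [ht]
  omega

lemma cand_nonempty {w : Fin n → Bool} (hw : Ballot w) {j : Fin n} (hj : w j = true) :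
    (Cand w j).Nonempty := by
  have hWj : ex w j.val = true := by rw [ex_val]; exact hj
  have hd : ht (ex w) (j.val+1) = ht (ex w) j.val - 1 := ht_succ_true hWj
  have h0 := ht_nonneg hw (j.val+1)
  have h1 : (0 : ℤ) < ht (ex w) j.val := by omega
  obtain ⟨i, hi0, hij, hWi, hhi, -⟩ :=
    exists_up (Nat.zero_le j.val) (by rw [ht_zero]; exact h1) le_rfl
  have hin : i < n := lt_trans hij j.isLt
  refine ⟨⟨i, hin⟩, mem_Cand.mpr ⟨hij, ?_, hhi⟩⟩
  rw [← ex_val w ⟨i, hin⟩]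
  exact hWi

lemma oo_mem {w : Fin n → Bool} (hw : Ballot w) {j : Fin n} (hj : w j = true) :
    oo w j ∈ Cand w j := by
  rw [oo, dif_pos (cand_nonempty hw hj)]
  exact Finset.max'_mem _ _

lemma oo_max {w : Fin n → Bool} (hw : Ballot w) {j : Fin n} (hj : w j = true)
    {i : Fin n} (hi : i ∈ Cand w j) : i ≤ oo w j := by
  rw [oo, dif_pos (cand_nonempty hw hj)]
  exact Finset.le_max' _ _ hi

lemma oo_lt {w : Fin n → Bool} (hw : Ballot w) {j : Fin n} (hj : w j = true) :
    oo w j < j := (mem_Cand.mp (oo_mem hw hj)).1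

lemma oo_false {w : Fin n → Bool} (hw : Ballot w) {j : Fin n} (hj : w j = true) :
    w (oo w j) = false := (mem_Cand.mp (oo_mem hw hj)).2.1

lemma oo_ht {w : Fin n → Bool} (hw : Ballot w) {j : Fin n} (hj : w j = true) :
    ht (ex w) ((oo w j).val+1) = ht (ex w) j.val := (mem_Cand.mp (oo_mem hw hj)).2.2

/-- Lemma A: the path stays at height ≥ ht j strictly between the opener and its closer. -/
lemma lemmaA {w : Fin n → Bool} (hw : Ballot w) {j : Fin n} (hj : w j = true) :
    ∀ k, (oo w j).val < k → k ≤ j.val → ht (ex w) j.val ≤ ht (ex w) k := by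
  intro k hk1 hk2
  by_contra hcon
  push_neg at hcon
  obtain ⟨i, hi1, hi2, hWi, hhi, -⟩ := exists_up hk2 hcon le_rfl
  have hin : i < n := lt_trans hi2 j.isLt
  have : (⟨i, hin⟩ : Fin n) ∈ Cand w j := by
    refine mem_Cand.mpr ⟨hi2, ?_, hhi⟩
    rw [← ex_val w ⟨i, hin⟩]; exact hWi
  have := oo_max hw hj this
  have : i ≤ (oo w j).val := this
  omega

lemma oo_inj {w : Fin n → Bool} (hw : Ballot w) {j j' : Fin n}
    (hj : w j = true) (hj' : w j' = true) (hjj' : j < j') : oo w j ≠ oo w j' := by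
  intro he
  have e1 : ht (ex w) j.val = ht (ex w) j'.val := by
    rw [← oo_ht hw hj, he, oo_ht hw hj']
  have hA := lemmaA hw hj' (j.val+1)
    (by have := oo_lt hw hj; rw [he] at this; exact Nat.lt_succ_of_lt this)
    (by exact hjj')
  have hWj : ex w j.val = true := by rw [ex_val]; exact hj
  have := ht_succ_true hWj
  omega

lemma nc1_core {w : Fin n → Bool} (hw : Ballot w) {j j' : Fin n}
    (hj : w j = true) (hj' : w j' = true)
    (h1 : oo w j < oo w j') (h2 : oo w j' < j) (h3 : j < j') : False := by
  have hlt2 : (oo w j').val < j.val := h2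
  have hlt3 : j.val < j'.val := h3
  have hb := lemmaA hw hj' (j.val+1) (Nat.lt_succ_of_lt hlt2) hlt3
  have hWj : ex w j.val = true := by rw [ex_val]; exact hj
  have hjd : ht (ex w) (j.val+1) = ht (ex w) j.val - 1 := ht_succ_true hWj
  have hc := lemmaA hw hj ((oo w j').val+1) (Nat.lt_succ_of_lt h1) hlt2
  have hd := oo_ht hw hj'
  omega

lemma nc2_core {w : Fin n → Bool} (hw : Ballot w) {j k : Fin n}
    (hj : w j = true) (hk1 : oo w j < k) (hk2 : k < j) (hkf : w k = false)
    (hfree : ∀ j'' : Fin n, w j'' = true → oo w j'' ≠ k) : False := by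
  have hWk : ex w k.val = false := by rw [ex_val]; exact hkf
  have hku : ht (ex w) (k.val+1) = ht (ex w) k.val + 1 := ht_succ_false hWk
  have hAk : ht (ex w) j.val ≤ ht (ex w) k.val := lemmaA hw hj k.val hk1 (le_of_lt hk2)
  have hWj : ex w j.val = true := by rw [ex_val]; exact hj
  have hjd : ht (ex w) (j.val+1) = ht (ex w) j.val - 1 := ht_succ_true hWj
  have hdrop : ht (ex w) (j.val+1) < ht (ex w) (k.val+1) := by omega
  obtain ⟨j0, hj01, hj02, hWj0, hhj0, hint⟩ := exists_first_down (show k.val < j.val from hk2) hdrop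
  have hj0n : j0 < n := lt_of_le_of_lt hj02 j.isLt
  set j'' : Fin n := ⟨j0, hj0n⟩ with hj''
  have hwj'' : w j'' = true := by rw [← ex_val w j'']; exact hWj0
  have hkC : k ∈ Cand w j'' := mem_Cand.mpr ⟨hj01, hkf, by rw [hhj0]⟩
  have hle : k ≤ oo w j'' := oo_max hw hwj'' hkC
  have hne : oo w j'' ≠ k := hfree j'' hwj''
  have hklt : k < oo w j'' := lt_of_le_of_ne hle (fun h => hne h.symm)
  set m := oo w j'' with hm
  have hmC := mem_Cand.mp (oo_mem hw hwj'')
  have hWm : ex w m.val = false := by rw [ex_val]; exact hmC.2.1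
  have hmu : ht (ex w) (m.val+1) = ht (ex w) m.val + 1 := ht_succ_false hWm
  have hmht : ht (ex w) (m.val+1) = ht (ex w) j0 := hmC.2.2
  have hbound := hint m.val (by exact hklt) (le_of_lt hmC.1)
  omega

lemma arc_oo {d : HalfDiag n} {i j : Fin n}
    (hij : ({i,j} : Finset (Fin n)) ∈ d.arcs) (hlt : i < j) : oo (Phi d) j = i := by
  have hin : ∃ a ∈ d.arcs, i ∈ a := ⟨_, hij, by simp⟩
  have hpt : pt d i = j := by
    have he : ({i,j} : Finset (Fin n)) = {i, pt d i} := mem_arc_eq hij (by simp)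
    have : j ∈ ({i, pt d i} : Finset (Fin n)) := by rw [← he]; simp
    rcases Finset.mem_insert.mp this with h' | h'
    · exact absurd h'.symm (ne_of_lt hlt)
    · exact (Finset.mem_singleton.mp h').symm
  have hiC : i ∈ Cand (Phi d) j := by
    refine mem_Cand.mpr ⟨hlt, Phi_false.mpr ?_, balance hij hlt⟩
    exact opener_not_isCl hin (by rw [hpt]; exact hlt)
  have hne : (Cand (Phi d) j).Nonempty := ⟨i, hiC⟩
  rw [oo, dif_pos hne]
  apply le_antisymm
  · by_contra hcon
    push_neg at hcon
    have hmem := mem_Cand.mp (Finset.max'_mem _ hne)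
    exact no_higher hij hcon hmem.1 hmem.2.1 hmem.2.2
  · exact Finset.le_max' _ i hiC

lemma arcs_eq (d : HalfDiag n) :
    d.arcs = (Finset.univ.filter (fun j => Phi d j = true)).image
      (fun j => ({oo (Phi d) j, j} : Finset (Fin n))) := by
  ext a
  constructor
  · intro ha
    obtain ⟨i, j, hlt, rfl⟩ := arc_form ha
    refine Finset.mem_image.mpr ⟨j, Finset.mem_filter.mpr
      ⟨Finset.mem_univ _, Phi_true.mpr ⟨i, hlt, ha⟩⟩, ?_⟩
    rw [arc_oo ha hlt]
  · intro ha
    obtain ⟨j, hj, rfl⟩ := Finset.mem_image.mp ha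
    obtain ⟨i, hlt, harc⟩ := Phi_true.mp (Finset.mem_filter.mp hj).2
    rwa [arc_oo harc hlt]

lemma halfdiag_ext {d d' : HalfDiag n} (h : d.arcs = d'.arcs) : d = d' := by
  cases d; cases d'; cases h; rfl

/-- construction of a half-diagram from a ballot word -/
lemma exists_diag {w : Fin n → Bool} (hw : Ballot w) :
    ∃ d : HalfDiag n, Phi d = w ∧ d.arcs.card = cB true (ex w) n := by
  classical
  set A := (Finset.univ.filter (fun j => w j = true)).image
    (fun j => ({oo w j, j} : Finset (Fin n))) with hA
  have memA : ∀ a, a ∈ A ↔ ∃ j, w j = true ∧ a = ({oo w j, j} : Finset (Fin n)) := by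
    intro a
    simp only [hA, Finset.mem_image, Finset.mem_filter, Finset.mem_univ, true_and]
    constructor
    · rintro ⟨j, hj, rfl⟩; exact ⟨j, hj, rfl⟩
    · rintro ⟨j, hj, rfl⟩; exact ⟨j, hj, rfl⟩
  have pair_cases : ∀ (j x y : Fin n), w j = true →
      x ∈ ({oo w j, j} : Finset (Fin n)) → y ∈ ({oo w j, j} : Finset (Fin n)) →
      x < y → x = oo w j ∧ y = j := by
    intro j x y hj hx hy hxy
    have hoj := oo_lt hw hj
    rcases Finset.mem_insert.mp hx with rfl | hx' <;>
      rcases Finset.mem_insert.mp hy with h' | h'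
    · exact absurd (h' ▸ hxy) (lt_irrefl _)
    · exact ⟨rfl, Finset.mem_singleton.mp h'⟩
    · rw [Finset.mem_singleton.mp hx'] at hxy
      rw [h'] at hxy
      exact absurd (lt_trans hxy hoj) (lt_irrefl _)
    · rw [Finset.mem_singleton.mp hx', Finset.mem_singleton.mp h'] at hxy
      exact absurd hxy (lt_irrefl _)
  have hdisj : ∀ a ∈ A, ∀ b ∈ A, a ≠ b → Disjoint a b := by
    intro a ha b hb hne
    obtain ⟨j, hj, rfl⟩ := (memA a).mp ha
    obtain ⟨j', hj', rfl⟩ := (memA b).mp hb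
    have hjj' : j ≠ j' := by rintro rfl; exact hne rfl
    have h1 : oo w j ≠ oo w j' := by
      intro he
      rcases lt_or_gt_of_ne hjj' with h | h
      · exact oo_inj hw hj hj' h he
      · exact oo_inj hw hj' hj h he.symm
    have h2 : oo w j ≠ j' := by
      intro he
      have hf := oo_false hw hj
      rw [he, hj'] at hf
      exact Bool.noConfusion hf
    have h3 : j ≠ oo w j' := by
      intro he
      have hf := oo_false hw hj'
      rw [← he, hj] at hf
      exact Bool.noConfusion hf
    rw [Finset.disjoint_left]
    intro x hx hx'
    have hx0 : x = oo w j ∨ x = j := by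
      rcases Finset.mem_insert.mp hx with h | h
      exacts [Or.inl h, Or.inr (Finset.mem_singleton.mp h)]
    have hx0' : x = oo w j' ∨ x = j' := by
      rcases Finset.mem_insert.mp hx' with h | h
      exacts [Or.inl h, Or.inr (Finset.mem_singleton.mp h)]
    rcases hx0 with rfl | rfl <;> rcases hx0' with he | he
    · exact h1 he
    · exact h2 he
    · exact h3 he
    · exact hjj' he
  refine ⟨⟨A, ?_, hdisj, ?_, ?_⟩, ?_, ?_⟩
  · -- two
    intro a ha
    obtain ⟨j, hj, rfl⟩ := (memA a).mp ha
    exact Finset.card_pair (ne_of_lt (oo_lt hw hj))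
  · -- nc1
    intro a ha b hb i0 j0 k0 l0 hi0 hj0 hk0 hl0 o1 o2 o3
    obtain ⟨j, hj, rfl⟩ := (memA a).mp ha
    obtain ⟨j', hj', rfl⟩ := (memA b).mp hb
    obtain ⟨ei, ej⟩ := pair_cases j i0 j0 hj hi0 hj0 (lt_trans o1 o2)
    obtain ⟨ek, el⟩ := pair_cases j' k0 l0 hj' hk0 hl0 (lt_trans o2 o3)
    subst ei ej ek el
    exact nc1_core hw hj hj' o1 o2 o3
  · -- nc2
    intro a ha i0 j0 hi0 hj0 k hfree h1 h2
    obtain ⟨j, hj, rfl⟩ := (memA a).mp ha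
    obtain ⟨ei, ej⟩ := pair_cases j i0 j0 hj hi0 hj0 (lt_trans h1 h2)
    subst ei ej
    have hkf : w k = false := by
      rcases hkt : w k with _ | _
      · rfl
      · exact absurd (by simp : k ∈ ({oo w k, k} : Finset (Fin n)))
          (hfree _ ((memA _).mpr ⟨k, hkt, rfl⟩))
    have hfree' : ∀ j'' : Fin n, w j'' = true → oo w j'' ≠ k := by
      intro j'' hj'' he
      exact absurd (by rw [← he]; simp : k ∈ ({oo w j'', j''} : Finset (Fin n)))
        (hfree _ ((memA _).mpr ⟨j'', hj'', rfl⟩))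
    exact nc2_core hw hj h1 h2 hkf hfree'
  · -- Phi = w
    funext x
    rcases hx : w x with _ | _
    · refine Phi_false.mpr ?_
      rintro ⟨i, hlt, hmem⟩
      obtain ⟨j, hj, he⟩ := (memA _).mp hmem
      have hxm : x ∈ ({oo w j, j} : Finset (Fin n)) := by rw [← he]; simp
      have him : i ∈ ({oo w j, j} : Finset (Fin n)) := by rw [← he]; simp
      obtain ⟨e1, e2⟩ := pair_cases j i x hj him hxm hlt
      rw [e2, hj] at hx
      exact Bool.noConfusion hx
    · exact Phi_true.mpr ⟨oo w x, oo_lt hw hx, (memA _).mpr ⟨x, hx, rfl⟩⟩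
  · -- card
    show A.card = cB true (ex w) n
    have hinj : Set.InjOn (fun j => ({oo w j, j} : Finset (Fin n)))
        (Finset.univ.filter (fun j => w j = true)) := by
      intro a ha b hb he
      simp only [Finset.coe_filter, Finset.mem_univ, true_and, Set.mem_setOf_eq] at ha hb
      simp only at he
      have hab : a ∈ ({oo w b, b} : Finset (Fin n)) := by rw [← he]; simp
      rcases Finset.mem_insert.mp hab with h' | h'
      · have hf := oo_false hw hb
        rw [← h', ha] at hf
        exact Bool.noConfusion hf
      · exact Finset.mem_singleton.mp h'
    rw [hA, Finset.card_image_of_injOn hinj, cB_conv w true le_rfl]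
    congr 1
    ext x
    simp [x.isLt]

lemma ex_snoc_lt (w : Fin n → Bool) (b : Bool) {k : ℕ} (hk : k < n) :
    ex (Fin.snoc w b) k = ex w k := by
  rw [ex, ex]
  rw [dif_pos (Nat.lt_succ_of_lt hk), dif_pos hk]
  have h : (⟨k, Nat.lt_succ_of_lt hk⟩ : Fin (n+1)) = Fin.castSucc ⟨k, hk⟩ := rfl
  rw [h, Fin.snoc_castSucc]

lemma ex_snoc_last (w : Fin n → Bool) (b : Bool) :
    ex (Fin.snoc w b) n = b := by
  rw [ex, dif_pos (Nat.lt_succ_self n)]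
  have h : (⟨n, Nat.lt_succ_self n⟩ : Fin (n+1)) = Fin.last n := rfl
  rw [h, Fin.snoc_last]

lemma cB_snoc_le (b' : Bool) (w : Fin n → Bool) (b : Bool) {k : ℕ} (hk : k ≤ n) :
    cB b' (ex (Fin.snoc w b)) k = cB b' (ex w) k := by
  unfold cB
  congr 1
  apply Finset.filter_congr
  intro i hi
  rw [ex_snoc_lt w b (lt_of_lt_of_le (Finset.mem_range.mp hi) hk)]

lemma cB_snoc_succ (b' : Bool) (w : Fin n → Bool) (b : Bool) :
    cB b' (ex (Fin.snoc w b)) (n+1) = cB b' (ex w) n + if b = b' then 1 else 0 := by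
  rw [cB_succ, cB_snoc_le b' w b le_rfl, ex_snoc_last]

lemma cT_add_cF (W : ℕ → Bool) (k : ℕ) : cB true W k + cB false W k = k := by
  unfold cB
  have h := Finset.card_filter_add_card_filter_not
    (s := Finset.range k) (p := fun i => W i = true)
  rw [Finset.card_range] at h
  have he : Finset.filter (fun a => ¬ W a = true) (Finset.range k)
      = Finset.filter (fun i => W i = false) (Finset.range k) := by
    apply Finset.filter_congr
    intro i _
    simp
  rw [he] at h
  omega

lemma ballot_snoc (w : Fin n → Bool) (b : Bool) :
    Ballot (Fin.snoc w b) ↔ Ballot w ∧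
      (cB true (ex w) n + (if b = true then 1 else 0)
        ≤ cB false (ex w) n + (if b = false then 1 else 0)) := by
  constructor
  · intro h
    have hb : ∀ k ≤ n, cB true (ex w) k ≤ cB false (ex w) k := by
      intro k hk
      have hh := h k
      rwa [cB_snoc_le _ _ _ hk, cB_snoc_le _ _ _ hk] at hh
    refine ⟨ballot_of_le_n w hb, ?_⟩
    have hh := h (n+1)
    rwa [cB_snoc_succ, cB_snoc_succ] at hh
  · rintro ⟨h1, h2⟩
    apply ballot_of_le_n
    intro k hk
    rcases le_or_gt k n with hk' | hk'
    · rw [cB_snoc_le _ _ _ hk', cB_snoc_le _ _ _ hk']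
      exact h1 k
    · have hk2 : k = n+1 := by omega
      subst hk2
      rw [cB_snoc_succ, cB_snoc_succ]
      exact h2

open Classical in
noncomputable def BSet (n p : ℕ) : Finset (Fin n → Bool) :=
  Finset.univ.filter (fun w => cB true (ex w) n = p ∧ Ballot w)

lemma mem_BSet {p : ℕ} {w : Fin n → Bool} :
    w ∈ BSet n p ↔ cB true (ex w) n = p ∧ Ballot w := by
  classical
  simp [BSet]

lemma BSet_zero (p : ℕ) : (BSet 0 p).card = if p = 0 then 1 else 0 := by
  classical
  have hz : ∀ (w : Fin 0 → Bool) (k : ℕ), cB true (ex w) k = 0 := by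
    intro w k
    unfold cB
    rw [Finset.card_eq_zero]
    ext i
    simp [ex]
  rcases Nat.eq_zero_or_pos p with rfl | hp
  · rw [if_pos rfl]
    have : BSet 0 0 = Finset.univ := by
      ext w
      simp only [Finset.mem_univ, iff_true, mem_BSet]
      exact ⟨hz w 0, fun k => by rw [hz w k]; exact Nat.zero_le _⟩
    rw [this]
    simp
  · rw [if_neg (by omega)]
    rw [Finset.card_eq_zero]
    ext w
    simp only [Finset.notMem_empty, iff_false, mem_BSet]
    rintro ⟨hc, -⟩
    rw [hz w 0] at hc
    omega

lemma BSet_succ (n p : ℕ) :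
    (BSet (n+1) p).card = (BSet n p).card
      + (if 2*p ≤ n+1 ∧ p ≠ 0 then (BSet n (p-1)).card else 0) := by
  classical
  have hsplit : BSet (n+1) p =
      ((BSet n p).image (fun w => Fin.snoc w false)) ∪
      ((if 2*p ≤ n+1 ∧ p ≠ 0 then BSet n (p-1) else ∅).image
        (fun w => Fin.snoc w true)) := by
    ext v
    rw [Finset.mem_union, Finset.mem_image, Finset.mem_image, mem_BSet]
    constructor
    · rintro ⟨hc, hb⟩
      have hv : v = Fin.snoc (Fin.init v) (v (Fin.last n)) := (Fin.snoc_init_self v).symm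
      set u := Fin.init v with hu
      rw [hv] at hc hb
      rw [cB_snoc_succ] at hc
      obtain ⟨hbu, hfin⟩ := (ballot_snoc u (v (Fin.last n))).mp hb
      have hsum := cT_add_cF (ex u) n
      rcases hlast : v (Fin.last n) with _ | _
      · left
        refine ⟨u, mem_BSet.mpr ⟨?_, hbu⟩, ?_⟩
        · rw [hlast] at hc; norm_num at hc; exact hc
        · rw [← hlast]; exact hv.symm
      · right
        rw [hlast] at hc hfin
        norm_num at hc hfin
        have hp0 : p ≠ 0 := by omega
        have hcu : cB true (ex u) n = p - 1 := by omega
        have h2p : 2*p ≤ n+1 := by omega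
        rw [if_pos ⟨h2p, hp0⟩]
        refine ⟨u, mem_BSet.mpr ⟨hcu, hbu⟩, ?_⟩
        rw [← hlast]; exact hv.symm
    · rintro (⟨u, hu, rfl⟩ | ⟨u, hu, rfl⟩)
      · obtain ⟨hcu, hbu⟩ := mem_BSet.mp hu
        constructor
        · rw [cB_snoc_succ]; simpa using hcu
        · refine (ballot_snoc u false).mpr ⟨hbu, ?_⟩
          have hh := hbu n
          norm_num
          omega
      · by_cases hcond : 2*p ≤ n+1 ∧ p ≠ 0
        · rw [if_pos hcond] at hu
          obtain ⟨hc1, hc2⟩ := hcond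
          obtain ⟨hcu, hbu⟩ := mem_BSet.mp hu
          have hsum := cT_add_cF (ex u) n
          constructor
          · rw [cB_snoc_succ]
            simp only [if_pos rfl, if_true]
            omega
          · refine (ballot_snoc u true).mpr ⟨hbu, ?_⟩
            simp only [Bool.true_eq_false, if_true, if_false, if_pos rfl, if_neg not_false]
            omega
        · rw [if_neg hcond] at hu
          simp at hu
  have hinj : ∀ b : Bool, Function.Injective
      (fun w : Fin n → Bool => (Fin.snoc w b : Fin (n+1) → Bool)) := by
    intro b u u' h
    have h2 := congrArg Fin.init h
    simpa [Fin.init_snoc] using h2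
  have hdisj : Disjoint
      ((BSet n p).image (fun w => (Fin.snoc w false : Fin (n+1) → Bool)))
      ((if 2*p ≤ n+1 ∧ p ≠ 0 then BSet n (p-1) else ∅).image
        (fun w => (Fin.snoc w true : Fin (n+1) → Bool))) := by
    rw [Finset.disjoint_left]
    rintro v hv1 hv2
    obtain ⟨u, -, rfl⟩ := Finset.mem_image.mp hv1
    obtain ⟨u', -, he⟩ := Finset.mem_image.mp hv2
    have := congrFun he (Fin.last n)
    simp [Fin.snoc_last] at this
  rw [hsplit, Finset.card_union_of_disjoint hdisj,
    Finset.card_image_of_injective _ (hinj false),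
    Finset.card_image_of_injective _ (hinj true)]
  congr 1
  split
  · rfl
  · simp

lemma BSet_card (n : ℕ) : ∀ p : ℕ, (((BSet n p).card : ℕ) : ℤ)
    = if 2*p ≤ n then ((n.choose p : ℕ) : ℤ)
        - (if p = 0 then 0 else ((n.choose (p-1) : ℕ) : ℤ)) else 0 := by
  induction n with
  | zero =>
    intro p
    rw [BSet_zero]
    rcases Nat.eq_zero_or_pos p with rfl | hp
    · simp
    · rw [if_neg (by omega), if_neg (by omega : ¬ 2*p ≤ 0)]
      norm_num
  | succ n ih =>
    intro p
    rcases p with _ | q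
    · rw [BSet_succ, if_neg (by simp)]
      have e0 := ih 0
      rw [if_pos (by omega : 2*0 ≤ n), if_pos rfl] at e0
      rw [if_pos (by omega : 2*0 ≤ n+1), if_pos rfl]
      simp only [Nat.choose_zero_right] at e0 ⊢
      push_cast at e0 ⊢
      omega
    · have hq1 : q + 1 ≠ 0 := Nat.succ_ne_zero q
      have HP : (((n+1).choose (q+1) : ℕ) : ℤ)
          = ((n.choose q : ℕ) : ℤ) + ((n.choose (q+1) : ℕ) : ℤ) := by
        rw [Nat.choose_succ_succ]
        push_cast
        ring
      have Hq : (((n+1).choose q : ℕ) : ℤ) = ((n.choose q : ℕ) : ℤ)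
          + (if q = 0 then (0:ℤ) else ((n.choose (q-1) : ℕ) : ℤ)) := by
        rcases q with _ | r
        · simp
        · rw [if_neg (Nat.succ_ne_zero r), Nat.choose_succ_succ]
          push_cast [Nat.succ_eq_add_one]
          ring
      have hsub : q + 1 - 1 = q := rfl
      by_cases h2 : 2*(q+1) ≤ n+1
      · have e2 := ih q
        rw [if_pos (by omega : 2*q ≤ n)] at e2
        rw [BSet_succ, if_pos ⟨h2, hq1⟩, hsub, if_pos h2, if_neg hq1]
        by_cases h1 : 2*(q+1) ≤ n
        · have e1 := ih (q+1)
          rw [if_pos h1, if_neg hq1, hsub] at e1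
          push_cast
          omega
        · have e1 := ih (q+1)
          rw [if_neg h1] at e1
          have hn : n = 2*q+1 := by omega
          have Hsym : ((n.choose (q+1) : ℕ) : ℤ) = ((n.choose q : ℕ) : ℤ) := by
            have hs := Nat.choose_symm (show q+1 ≤ n by omega)
            rw [show n - (q+1) = q from by omega] at hs
            exact_mod_cast hs.symm
          push_cast
          omega
      · rw [BSet_succ, if_neg (fun hc => h2 hc.1), if_neg (by omega : ¬ 2*(q+1) ≤ n+1)]
        have e1 := ih (q+1)
        rw [if_neg (by omega : ¬ 2*(q+1) ≤ n)] at e1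
        push_cast
        omega

end HDaux

open HDaux

theorem card_halfDiag (n p : ℕ) (h : 2 * p ≤ n) :
    {a : HalfDiag n | a.arcs.card = p}.ncard
      = n.choose p - (if p = 0 then 0 else n.choose (p - 1)) := by
  classical
  have hset : Phi '' {a : HalfDiag n | a.arcs.card = p} = ↑(BSet n p) := by
    ext w
    simp only [Set.mem_image, Set.mem_setOf_eq, Finset.mem_coe]
    constructor
    · rintro ⟨d, hd, rfl⟩
      refine mem_BSet.mpr ⟨?_, phi_ballot d⟩
      rw [cB_conv _ _ le_rfl]
      have he : (Finset.univ.filter (fun x : Fin n => x.val < n ∧ Phi d x = true))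
          = Finset.univ.filter (fun x => Phi d x = true) := by
        ext x
        simp [x.isLt]
      rw [he, closers_card d]
      exact hd
    · intro hw
      obtain ⟨hc, hb⟩ := mem_BSet.mp hw
      obtain ⟨d, hphi, hcard⟩ := exists_diag hb
      exact ⟨d, by rw [hcard, hc], hphi⟩
  have hinj : Set.InjOn Phi {a : HalfDiag n | a.arcs.card = p} := by
    intro d hd d' hd' he
    apply halfdiag_ext
    rw [arcs_eq d, arcs_eq d', he]
  have h1 : {a : HalfDiag n | a.arcs.card = p}.ncard = (BSet n p).card := by
    rw [← Set.ncard_image_of_injOn hinj, hset, Set.ncard_coe_finset]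
  rw [h1]
  have h2 := BSet_card n p
  rw [if_pos h] at h2
  rcases Nat.eq_zero_or_pos p with rfl | hp
  · rw [if_pos rfl] at h2 ⊢
    omega
  · rw [if_neg (by omega)] at h2 ⊢
    omega
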